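/- The plugging product σ ρ τ := Σ_{v∈N_τ} σ ρ_v τ on the span of decorated rooted trees (with vertex decorations in a commutative monoid) is a pre-Lie product: σ ρ (τ ρ w) − (σ ρ τ) ρ w = τ ρ (σ ρ w) − (τ ρ σ) ρ w. -/

import Mathlib

/-- Planar rooted trees with vertex decorations in `V` and edge decorations in `E`. -/
inductive RT (V E : Type) : Type where
  | node : V → List (E × RT V E) → RT V E

/-- One-step reordering of children (at the root or at a deeper vertex). -/
inductive Swap {V E : Type} : RT V E → RT V E → Prop where
  | here (v : V) (l₁ l₂ : List (E × RT V E)) (p q : E × RT V E) :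
      Swap (.node v (l₁ ++ p :: q :: l₂)) (.node v (l₁ ++ q :: p :: l₂))
  | child (v : V) (l₁ l₂ : List (E × RT V E)) (e : E) {t t' : RT V E} :
      Swap t t' → Swap (.node v (l₁ ++ (e, t) :: l₂)) (.node v (l₁ ++ (e, t') :: l₂))

/-- (Non-planar) decorated rooted trees: planar trees modulo reordering of children. -/
def QT (V E : Type) : Type := Quot (@Swap V E)

/-- The linear span of decorated rooted trees, with rational coefficients. -/
abbrev Span (V E : Type) : Type := QT V E →₀ ℚ

def qt {V E : Type} (t : RT V E) : QT V E := Quot.mk _ t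

/-- A tree, as a basis vector of the span. -/
noncomputable def bas {V E : Type} (t : RT V E) : Span V E := Finsupp.single (qt t) 1

/-- The element of the span given by a list of trees (sum with multiplicity). -/
noncomputable def ofList {V E : Type} (l : List (RT V E)) : Span V E := (l.map bas).sum

/-- Formal rational combination of planar trees, as an element of the span. -/
noncomputable def combo {V E : Type} (l : List (ℚ × RT V E)) : Span V E :=
  (l.map fun p => p.1 • bas p.2).sum

mutual
/-- List of the graftings of `σ` on each vertex of a tree, via a new `a`-edge. -/
def graftT {V E : Type} (a : E) (σ : RT V E) : RT V E → List (RT V E)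
  | .node v l => .node v ((a, σ) :: l) :: (graftL a σ l).map (.node v)
/-- Auxiliary: graftings of `σ` inside one of the listed subtrees. -/
def graftL {V E : Type} (a : E) (σ : RT V E) :
    List (E × RT V E) → List (List (E × RT V E))
  | [] => []
  | (e, t) :: r =>
      ((graftT a σ t).map fun t' => (e, t') :: r)
        ++ ((graftL a σ r).map fun r' => (e, t) :: r')
end

/-- Plugging of `σ` at the root of `τ`: the two roots are identified, their decorations
are added, and the root branches are joined. -/
def plugRoot {V E : Type} [AddCommMonoid V] : RT V E → RT V E → RT V E
  | .node v l, .node w m => .node (v + w) (l ++ m)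

mutual
/-- The summands `σ ρ_v τ` of the plugging product `σ ρ τ = Σ_{v ∈ N_τ} σ ρ_v τ`:
the root of `σ` is identified with the vertex `v` of `τ`, adding decorations. -/
def plugT {V E : Type} [AddCommMonoid V] (σ : RT V E) : RT V E → List (RT V E)
  | .node v l => plugRoot σ (.node v l) :: (plugL σ l).map (.node v)
/-- Auxiliary: pluggings of `σ` at vertices inside the listed subtrees. -/
def plugL {V E : Type} [AddCommMonoid V] (σ : RT V E) :
    List (E × RT V E) → List (List (E × RT V E))
  | [] => []
  | (e, t) :: r =>
      ((plugT σ t).map fun t' => (e, t') :: r)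
        ++ ((plugL σ r).map fun r' => (e, t) :: r')
end

-- toolkit
def mm {α β : Type} (F : α → β) (L : List α) : Multiset β := (L.map F : List β)

@[simp] theorem mm_nil {α β : Type} (F : α → β) : mm F [] = 0 := rfl
@[simp] theorem mm_cons {α β : Type} (F : α → β) (a : α) (L : List α) :
    mm F (a :: L) = F a ::ₘ mm F L := rfl
theorem mm_cons' {α β : Type} (F : α → β) (a : α) (L : List α) :
    mm F (a :: L) = {F a} + mm F L := by simp
@[simp] theorem mm_append {α β : Type} (F : α → β) (L₁ L₂ : List α) :
    mm F (L₁ ++ L₂) = mm F L₁ + mm F L₂ := by simp [mm]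
@[simp] theorem mm_map {α β γ : Type} (F : β → γ) (g : α → β) (L : List α) :
    mm F (L.map g) = mm (fun x => F (g x)) L := by simp [mm, List.map_map, Function.comp_def]
theorem mm_comp {α β γ : Type} (G : β → γ) (F : α → β) (L : List α) :
    Multiset.map G (mm F L) = mm (fun x => G (F x)) L := by simp [mm, Multiset.map_coe, List.map_map, Function.comp_def]
theorem mm_bind_nil {α β γ : Type} (F : α → γ) (L : List β) :
    mm F (L.flatMap fun _ => ([] : List α)) = 0 := by induction L <;> simp [List.flatMap_cons, *]
theorem mm_bind_cons {α β γ : Type} (F : α → γ) (g : β → α) (h : β → List α) (L : List β) :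
    mm F (L.flatMap fun x => g x :: h x) = mm (fun x => F (g x)) L + mm F (L.flatMap h) := by
  induction L with
  | nil => simp
  | cons a L ih => simp [List.flatMap_cons, ih]; abel
theorem mm_bind_append {α β γ : Type} (F : α → γ) (g h : β → List α) (L : List β) :
    mm F (L.flatMap fun x => g x ++ h x) = mm F (L.flatMap g) + mm F (L.flatMap h) := by
  induction L with
  | nil => simp
  | cons a L ih => simp [List.flatMap_cons, ih]; abel
theorem mm_bind_mapconst {α β γ δ : Type} (F : α → γ) (g : β → List δ) (h : δ → α) (L : List β) :
    mm F (L.flatMap fun x => (g x).map h) = mm (fun y => F (h y)) (L.flatMap g) := by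
  induction L with
  | nil => simp
  | cons a L ih => simp [List.flatMap_cons, ih]
theorem mm_bind_comm {α β γ δ : Type} (F : α → δ) (g : β → γ → α) (L₁ : List β) (L₂ : List γ) :
    mm F (L₁.flatMap fun x => L₂.map (g x)) = mm F (L₂.flatMap fun y => L₁.map fun x => g x y) := by
  induction L₁ with
  | nil => simpa using (mm_bind_nil F L₂).symm
  | cons a L ih =>
      simp only [List.flatMap_cons, mm_append, mm_map, ih]
      simp only [List.map_cons]
      rw [mm_bind_cons F (fun y => g a y) (fun y => List.map (fun x => g x y) L) L₂]

section trees
variable {V E : Type}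

theorem qt_perm (v : V) {m m' : List (E × RT V E)} (h : m.Perm m') :
    ∀ pre, qt (RT.node v (pre ++ m)) = qt (RT.node v (pre ++ m')) := by
  induction h with
  | nil => intro pre; rfl
  | cons x _ ih =>
      intro pre
      have := ih (pre ++ [x])
      simpa using this
  | swap x y l => intro pre; exact Quot.sound (Swap.here v pre l y x)
  | trans _ _ ih1 ih2 => intro pre; exact (ih1 pre).trans (ih2 pre)

theorem qt_perm' (v : V) {m m' : List (E × RT V E)} (h : m.Perm m') :
    qt (RT.node v m) = qt (RT.node v m') := qt_perm v h []

def CtxOK (F : List (E × RT V E) → QT V E) : Prop :=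
  ∀ pre (e : E) (x y : RT V E) post, qt x = qt y →
    F (pre ++ (e, x) :: post) = F (pre ++ (e, y) :: post)

theorem ctxOK_node (c : V) : CtxOK (fun l' => qt (RT.node c l') : List (E × RT V E) → QT V E) := by
  intro pre e x y post h
  exact congrArg (Quot.lift (fun z => qt (RT.node c (pre ++ (e, z) :: post)))
    (fun a b hs => Quot.sound (Swap.child c pre post e hs))) h

theorem ctxOK_cons {F : List (E × RT V E) → QT V E} (hF : CtxOK F) (p : E × RT V E) :
    CtxOK (fun l' => F (p :: l')) := by
  intro pre e x y post h
  exact hF (p :: pre) e x y post h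

theorem mm_qt_map {F : List (E × RT V E) → QT V E} (hF : CtxOK F) (e : E)
    (r : List (E × RT V E)) {X Y : List (RT V E)} (h : mm qt X = mm qt Y) :
    mm (fun t' => F ((e, t') :: r)) X = mm (fun t' => F ((e, t') :: r)) Y := by
  have h2 := congrArg (Multiset.map (α := QT V E) (Quot.lift (fun x => F ((e, x) :: r))
    (fun a b hs => hF [] e a b r (Quot.sound hs)))) h
  have h3 := (mm_comp _ qt X).symm.trans (h2.trans (mm_comp _ qt Y))
  exact h3

end trees


mutual
def plug2T {V E : Type} [AddCommMonoid V] (σ τ : RT V E) : RT V E → List (RT V E)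
  | .node v l =>
      plugRoot σ (plugRoot τ (.node v l)) ::
      (((plugL τ l).map fun l' => plugRoot σ (.node v l'))
        ++ ((plugL σ l).map fun l' => plugRoot τ (.node v l'))
        ++ (plug2L σ τ l).map (.node v))
def plug2L {V E : Type} [AddCommMonoid V] (σ τ : RT V E) :
    List (E × RT V E) → List (List (E × RT V E))
  | [] => []
  | (e, t) :: r =>
      ((plug2T σ τ t).map fun t' => (e, t') :: r)
        ++ ((plugT σ t).flatMap fun t' => (plugL τ r).map fun r' => (e, t') :: r')
        ++ ((plugT τ t).flatMap fun t' => (plugL σ r).map fun r' => (e, t') :: r')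
        ++ ((plug2L σ τ r).map fun r' => (e, t) :: r')
end

theorem plugL_append {V E : Type} [AddCommMonoid V] (σ : RT V E) :
    ∀ l₁ l₂ : List (E × RT V E),
      plugL σ (l₁ ++ l₂) =
        ((plugL σ l₁).map (· ++ l₂)) ++ ((plugL σ l₂).map (l₁ ++ ·)) := by
  intro l₁
  induction l₁ with
  | nil => intro l₂; simp [plugL]
  | cons p r ih =>
      intro l₂
      obtain ⟨e, t⟩ := p
      simp [plugL, ih l₂, List.map_map, Function.comp_def]

theorem qt_plugRoot_comm {V E : Type} [AddCommMonoid V] (σ τ w : RT V E) :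
    qt (plugRoot σ (plugRoot τ w)) = qt (plugRoot τ (plugRoot σ w)) := by
  obtain ⟨a, s⟩ := σ; obtain ⟨b, t⟩ := τ; obtain ⟨c, l⟩ := w
  show qt (RT.node (a + (b + c)) (s ++ (t ++ l))) = qt (RT.node (b + (a + c)) (t ++ (s ++ l)))
  rw [add_left_comm]
  refine qt_perm' _ ?_
  rw [← List.append_assoc, ← List.append_assoc]
  exact List.perm_append_comm.append_right l

mutual
theorem S_T {V E : Type} [AddCommMonoid V] (σ τ : RT V E) :
    ∀ w : RT V E, mm qt (plug2T σ τ w) = mm qt (plug2T τ σ w)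
  | .node c l => by
      simp only [plug2T, mm_cons, mm_append, mm_map]
      rw [qt_plugRoot_comm σ τ (.node c l),
        S_L σ τ l (fun l' => qt (RT.node c l')) (ctxOK_node c)]
      abel
theorem S_L {V E : Type} [AddCommMonoid V] (σ τ : RT V E) :
    ∀ l : List (E × RT V E), ∀ F : List (E × RT V E) → QT V E, CtxOK F →
      mm F (plug2L σ τ l) = mm F (plug2L τ σ l)
  | [] => by intro F hF; rfl
  | (e, t) :: r => by
      intro F hF
      simp only [plug2L, mm_append, mm_map]
      rw [mm_qt_map hF e r (S_T σ τ t),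
        S_L σ τ r (fun r' => F ((e, t) :: r')) (ctxOK_cons hF (e, t))]
      abel
end

mutual
theorem C1_T {V E : Type} [AddCommMonoid V] (x : V) (m m' : List (E × RT V E))
    (h : m.Perm m') : ∀ w : RT V E,
      mm qt (plugT (RT.node x m) w) = mm qt (plugT (RT.node x m') w)
  | .node c l => by
      simp only [plugT, mm_cons, mm_map]
      rw [C1_L x m m' h l (fun l' => qt (RT.node c l')) (ctxOK_node c)]
      congr 1
      exact qt_perm' _ (h.append_right l)
theorem C1_L {V E : Type} [AddCommMonoid V] (x : V) (m m' : List (E × RT V E))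
    (h : m.Perm m') : ∀ l : List (E × RT V E), ∀ F : List (E × RT V E) → QT V E, CtxOK F →
      mm F (plugL (RT.node x m) l) = mm F (plugL (RT.node x m') l)
  | [] => by intro F hF; rfl
  | (e, t) :: r => by
      intro F hF
      simp only [plugL, mm_append, mm_map]
      rw [mm_qt_map hF e r (C1_T x m m' h t),
        C1_L x m m' h r (fun r' => F ((e, t) :: r')) (ctxOK_cons hF (e, t))]
end

theorem DD {V E : Type} [AddCommMonoid V] (σ τ w : RT V E) :
    mm qt (plugT (plugRoot σ τ) w) = mm qt (plugT (plugRoot τ σ) w) := by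
  obtain ⟨a, s⟩ := σ; obtain ⟨b, t⟩ := τ
  show mm qt (plugT (RT.node (a + b) (s ++ t)) w) = mm qt (plugT (RT.node (b + a) (t ++ s)) w)
  rw [add_comm b a]
  exact C1_T (a + b) _ _ List.perm_append_comm w

theorem key_cancel1 {M : Type*} [AddCommMonoid M] [IsCancelAdd M] {a b g1 g2 : M}
    (h1 : a = b) (h : g1 + b = g2 + a) : g1 = g2 := by
  rw [h1] at h; exact add_right_cancel h

theorem key_cancel3 {M : Type*} [AddCommMonoid M] [IsCancelAdd M] {a b c d e f g1 g2 : M}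
    (h1 : a = b) (h2 : c = d) (h3 : e = f) (h : g1 + (b + d + f) = g2 + (a + c + e)) :
    g1 = g2 := by
  rw [h1, h2, h3] at h; exact add_right_cancel h

theorem mm_qt_map4 {V E : Type} {F : List (E × RT V E) → QT V E} (hF : CtxOK F) (e : E)
    (r : List (E × RT V E)) {X1 X2 X3 X4 : List (RT V E)}
    (h : mm qt X1 + mm qt X2 = mm qt X3 + mm qt X4) :
    mm (fun t' => F ((e, t') :: r)) X1 + mm (fun t' => F ((e, t') :: r)) X2 =
      mm (fun t' => F ((e, t') :: r)) X3 + mm (fun t' => F ((e, t') :: r)) X4 := by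
  have h2 := congrArg (Multiset.map (α := QT V E) (Quot.lift (fun x => F ((e, x) :: r))
    (fun a b hs => hF [] e a b r (Quot.sound hs)))) h
  have h3 := ((Multiset.map_add _ (mm qt X1) (mm qt X2)).symm.trans (h2.trans
    (Multiset.map_add _ (mm qt X3) (mm qt X4))))
  have h4 := (congrArg₂ (· + ·) (mm_comp _ qt X1) (mm_comp _ qt X2)).symm.trans
    (h3.trans (congrArg₂ (· + ·) (mm_comp _ qt X3) (mm_comp _ qt X4)))
  exact h4

mutual
theorem A_T {V E : Type} [AddCommMonoid V] (σ τ : RT V E) :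
    ∀ w : RT V E,
      mm qt ((plugT τ w).flatMap (plugT σ)) + mm qt (plugT (plugRoot σ τ) w) =
        mm qt ((plugT σ τ).flatMap fun u => plugT u w) + mm qt (plug2T σ τ w)
  | .node c l => by
      obtain ⟨a, s⟩ := σ; obtain ⟨b, t⟩ := τ
      refine key_cancel1 (A_T.go a s b t c l) ?_
      simp only [plugT, plugL, plug2T, plugRoot, plugL_append, List.flatMap_cons,
        List.flatMap_append, List.flatMap_map, List.map_append, List.map_map,
        Function.comp_def, mm_cons', mm_append, mm_map, mm_bind_cons, mm_bind_append,
        mm_bind_mapconst]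
      abel
theorem A_T.go {V E : Type} [AddCommMonoid V] (a : V) (s : List (E × RT V E))
    (b : V) (t : List (E × RT V E)) (c : V) (l : List (E × RT V E)) :
    mm (fun l' => qt (RT.node c l')) ((plugL (RT.node b t) l).flatMap (plugL (RT.node a s))) +
      mm (fun l' => qt (RT.node c l')) (plugL (plugRoot (RT.node a s) (RT.node b t)) l) =
    mm (fun l' => qt (RT.node c l'))
        ((plugT (RT.node a s) (RT.node b t)).flatMap fun u => plugL u l) +
      mm (fun l' => qt (RT.node c l')) (plug2L (RT.node a s) (RT.node b t) l) :=
  A_L (RT.node a s) (RT.node b t) l (fun l' => qt (RT.node c l')) (ctxOK_node c)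
theorem A_L {V E : Type} [AddCommMonoid V] (σ τ : RT V E) :
    ∀ l : List (E × RT V E), ∀ F : List (E × RT V E) → QT V E, CtxOK F →
      mm F ((plugL τ l).flatMap (plugL σ)) + mm F (plugL (plugRoot σ τ) l) =
        mm F ((plugT σ τ).flatMap fun u => plugL u l) + mm F (plug2L σ τ l)
  | [] => by
      intro F hF
      simp [plugL, plug2L, mm_bind_nil]
  | (e, t) :: r => by
      intro F hF
      refine key_cancel3 (mm_qt_map4 hF e r (A_T σ τ t))
        (A_L σ τ r (fun r' => F ((e, t) :: r')) (ctxOK_cons hF (e, t)))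
        (mm_bind_comm F (fun t' r' => (e, t') :: r') (plugT σ t) (plugL τ r)).symm ?_
      simp only [plugL, plug2L, List.flatMap_cons, List.flatMap_append, List.flatMap_map,
        List.map_append, List.map_map, Function.comp_def, mm_cons', mm_append, mm_map,
        mm_bind_cons, mm_bind_append, mm_bind_mapconst]
      abel
end

noncomputable def Phi {V E : Type} (M : Multiset (QT V E)) : Span V E :=
  (M.map fun q => Finsupp.single q (1 : ℚ)).sum

theorem Phi_add {V E : Type} (M N : Multiset (QT V E)) : Phi (M + N) = Phi M + Phi N := by
  simp [Phi]

theorem ofList_eq {V E : Type} (l : List (RT V E)) : ofList l = Phi (mm qt l) := by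
  simp only [ofList, Phi, mm, Multiset.map_coe, Multiset.sum_coe, List.map_map, Function.comp_def]
  rfl

theorem ofList_append {V E : Type} (l₁ l₂ : List (RT V E)) :
    ofList (l₁ ++ l₂) = ofList l₁ + ofList l₂ := by simp [ofList]

section final
variable {V E : Type} [AddCommMonoid V]
variable (p : Span V E →ₗ[ℚ] Span V E →ₗ[ℚ] Span V E)

theorem p_ofList_right (hp : ∀ σ τ : RT V E, p (bas σ) (bas τ) = ofList (plugT σ τ))
    (σ : RT V E) (L : List (RT V E)) :
    p (bas σ) (ofList L) = ofList (L.flatMap (plugT σ)) := by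
  induction L with
  | nil => simp [ofList]
  | cons u L ih =>
      have : ofList (u :: L) = bas u + ofList L := by simp [ofList]
      rw [this, map_add, hp, ih, List.flatMap_cons, ofList_append]

theorem p_ofList_left (hp : ∀ σ τ : RT V E, p (bas σ) (bas τ) = ofList (plugT σ τ))
    (w : RT V E) (L : List (RT V E)) :
    p (ofList L) (bas w) = ofList (L.flatMap fun u => plugT u w) := by
  induction L with
  | nil => simp [ofList]
  | cons u L ih =>
      have : ofList (u :: L) = bas u + ofList L := by simp [ofList]
      rw [this, map_add, LinearMap.add_apply, hp, ih, List.flatMap_cons, ofList_append]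

theorem mainBasis (hp : ∀ σ τ : RT V E, p (bas σ) (bas τ) = ofList (plugT σ τ))
    (σ τ w : RT V E) :
    p (bas σ) (p (bas τ) (bas w)) - p (p (bas σ) (bas τ)) (bas w) =
      p (bas τ) (p (bas σ) (bas w)) - p (p (bas τ) (bas σ)) (bas w) := by
  rw [hp τ w, hp σ w, hp σ τ, hp τ σ, p_ofList_right p hp, p_ofList_right p hp,
    p_ofList_left p hp, p_ofList_left p hp]
  have e1 := congrArg Phi (A_T σ τ w)
  have e2 := congrArg Phi (A_T τ σ w)
  rw [Phi_add, Phi_add] at e1 e2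
  have s := congrArg Phi (S_T σ τ w)
  have d := congrArg Phi (DD σ τ w)
  rw [← ofList_eq, ← ofList_eq, ← ofList_eq, ← ofList_eq] at e1 e2
  rw [← ofList_eq, ← ofList_eq] at s d
  rw [eq_sub_of_add_eq e1, eq_sub_of_add_eq e2, s, d]
  abel

end final


/-- **The plugging product is pre-Lie.**  On the span of decorated rooted trees (vertex
decorations in a commutative monoid), the bilinear extension `p` of the plugging
`σ ρ τ := Σ_{v∈N_τ} σ ρ_v τ` satisfies the pre-Lie identity
`σ ρ (τ ρ w) − (σ ρ τ) ρ w = τ ρ (σ ρ w) − (τ ρ σ) ρ w`. -/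
theorem plugging_preLie {V E : Type} [AddCommMonoid V]
    (p : Span V E →ₗ[ℚ] Span V E →ₗ[ℚ] Span V E)
    (hp : ∀ σ τ : RT V E, p (bas σ) (bas τ) = ofList (plugT σ τ)) :
    ∀ x y z : Span V E, p x (p y z) - p (p x y) z = p y (p x z) - p (p y x) z := by
  intro x y z
  induction x using Finsupp.induction_linear with
  | zero => simp
  | add f g hf hg =>
      simp only [map_add, LinearMap.add_apply]
      rw [add_sub_add_comm, hf, hg, ← add_sub_add_comm]
  | single qx cx =>
    induction y using Finsupp.induction_linear with
    | zero => simp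
    | add f g hf hg =>
        simp only [map_add, LinearMap.add_apply]
        rw [add_sub_add_comm, hf, hg, ← add_sub_add_comm]
    | single qy cy =>
      induction z using Finsupp.induction_linear with
      | zero => simp
      | add f g hf hg =>
          simp only [map_add, LinearMap.add_apply]
          rw [add_sub_add_comm, hf, hg, ← add_sub_add_comm]
      | single qz cz =>
          obtain ⟨tx, rfl⟩ := Quot.exists_rep qx
          obtain ⟨ty, rfl⟩ := Quot.exists_rep qy
          obtain ⟨tz, rfl⟩ := Quot.exists_rep qz
          have ex : (Finsupp.single (Quot.mk _ tx) cx : Span V E) = cx • bas tx := by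
            simp [bas, Finsupp.smul_single]; rfl
          have ey : (Finsupp.single (Quot.mk _ ty) cy : Span V E) = cy • bas ty := by
            simp [bas, Finsupp.smul_single]; rfl
          have ez : (Finsupp.single (Quot.mk _ tz) cz : Span V E) = cz • bas tz := by
            simp [bas, Finsupp.smul_single]; rfl
          rw [ex, ey, ez]
          simp only [map_smul, LinearMap.smul_apply, smul_smul, mul_assoc, mul_comm,
            mul_left_comm]
          rw [← smul_sub, ← smul_sub, mainBasis p hp tx ty tz]
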